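/- Trace bound for the Ky Fan k-norm of a positive semidefinite matrix: if A is an n×n positive semidefinite Hermitian matrix and k ∈ {1,...,n}, then the sum of the k largest eigenvalues of A is at most Tr(A)·k/n + √((n−k)·k/n)·√(Tr(A²) − Tr(A)²/n); in particular, Σ_{j=1}^k λ_j(A) ≤ (k/n)·Tr(A) + √((n−k)k/n · Tr(A²)). -/

import Mathlib

open Finset
open scoped ComplexOrder

/-- The sum of the `k` largest eigenvalues of a Hermitian matrix (the Ky Fan
`k`-norm of a positive semidefinite matrix). -/
noncomputable def sumKLargestEigenvalues {n : ℕ} {A : Matrix (Fin n) (Fin n) ℂ}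
    (hA : A.IsHermitian) (k : ℕ) : ℝ :=
  ⨆ T : {T : Finset (Fin n) // T.card = k}, ∑ j ∈ T.1, hA.eigenvalues j

lemma conj_trace_eq {m : Type*} [Fintype m] [DecidableEq m] (U D : Matrix m m ℂ)
    (hU : star U * U = 1) : (U * D * star U).trace = D.trace := by
  rw [Matrix.trace_mul_cycle, hU, Matrix.one_mul]

lemma conj_mul_conj {m : Type*} [Fintype m] [DecidableEq m] (U D : Matrix m m ℂ)
    (hU : star U * U = 1) :
    (U * D * star U) * (U * D * star U) = U * (D * D) * star U := by
  simp only [Matrix.mul_assoc]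
  rw [show star U * (U * (D * star U)) = D * star U by
    rw [← Matrix.mul_assoc, hU, Matrix.one_mul]]

lemma trace_eq_sum_eigenvalues' {n : ℕ} {A : Matrix (Fin n) (Fin n) ℂ}
    (hA : A.IsHermitian) : A.trace = ∑ i, ((hA.eigenvalues i : ℂ)) := by
  have hU : star (hA.eigenvectorUnitary : Matrix (Fin n) (Fin n) ℂ) *
      (hA.eigenvectorUnitary : Matrix (Fin n) (Fin n) ℂ) = 1 :=
    Matrix.mem_unitaryGroup_iff'.mp hA.eigenvectorUnitary.2
  conv_lhs => rw [hA.spectral_theorem, Unitary.conjStarAlgAut_apply]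
  rw [conj_trace_eq _ _ hU, Matrix.trace_diagonal]
  rfl

lemma trace_mul_self_eq_sum_sq {n : ℕ} {A : Matrix (Fin n) (Fin n) ℂ}
    (hA : A.IsHermitian) : (A * A).trace = ∑ i, ((hA.eigenvalues i : ℂ)) ^ 2 := by
  have hU : star (hA.eigenvectorUnitary : Matrix (Fin n) (Fin n) ℂ) *
      (hA.eigenvectorUnitary : Matrix (Fin n) (Fin n) ℂ) = 1 :=
    Matrix.mem_unitaryGroup_iff'.mp hA.eigenvectorUnitary.2
  conv_lhs => rw [hA.spectral_theorem, Unitary.conjStarAlgAut_apply]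
  rw [conj_mul_conj _ _ hU, conj_trace_eq _ _ hU, Matrix.diagonal_mul_diagonal,
    Matrix.trace_diagonal]
  simp [sq]

/-- **Wolkowicz–Styan-type trace bound for the Ky Fan `k`-norm of a PSD matrix**:
if `A` is `n×n` positive semidefinite Hermitian and `k ∈ {1,…,n}`, then
`∑_{j≤k} λ_j(A) ≤ (k/n)·Tr(A) + √((n−k)k/n)·√(Tr(A²) − Tr(A)²/n)`, and in
particular `∑_{j≤k} λ_j(A) ≤ (k/n)·Tr(A) + √((n−k)k/n · Tr(A²))`. -/
theorem sum_k_largest_eigenvalues_trace_bound {n : ℕ} (hn : 1 ≤ n)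
    (A : Matrix (Fin n) (Fin n) ℂ) (hA : A.PosSemidef)
    (k : ℕ) (hk1 : 1 ≤ k) (hkn : k ≤ n) :
    sumKLargestEigenvalues hA.1 k ≤
        ((k : ℝ) / n) * A.trace.re +
          Real.sqrt (((n : ℝ) - k) * k / n) *
            Real.sqrt ((A * A).trace.re - A.trace.re ^ 2 / n) ∧
      sumKLargestEigenvalues hA.1 k ≤
        ((k : ℝ) / n) * A.trace.re +
          Real.sqrt (((n : ℝ) - k) * k / n * (A * A).trace.re) := by
  have hn0 : (n : ℝ) ≠ 0 := by positivity
  set lam := hA.1.eigenvalues with hlam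
  set tr := A.trace.re with htrdef
  have htr : tr = ∑ i, lam i := by
    rw [htrdef, trace_eq_sum_eigenvalues' hA.1, Complex.re_sum]
    simp
    rfl
  have htr2 : (A * A).trace.re = ∑ i, (lam i) ^ 2 := by
    rw [trace_mul_self_eq_sum_sq hA.1, Complex.re_sum]
    simp [← Complex.ofReal_pow]
    rfl
  -- Cauchy–Schwarz step: bound each k-subset sum.
  have key : ∀ T : Finset (Fin n), T.card = k →
      ∑ j ∈ T, lam j ≤ ((k : ℝ) / n) * tr +
        Real.sqrt (((n : ℝ) - k) * k / n) *
          Real.sqrt ((A * A).trace.re - tr ^ 2 / n) := by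
    intro T hT
    set μ : ℝ := tr / n with hμ
    set f : Fin n → ℝ := fun j => (if j ∈ T then (1 : ℝ) else 0) - (k : ℝ) / n with hf
    set g : Fin n → ℝ := fun j => lam j - μ with hg
    have hchi : ∑ j, (if j ∈ T then (1 : ℝ) else 0) = (k : ℝ) := by
      rw [Finset.sum_ite_mem]
      simp [Finset.univ_inter, hT]
    have hfg : ∑ j, f j * g j = ∑ j ∈ T, lam j - (k : ℝ) * μ := by
      have expand : ∀ j, f j * g j =
          (if j ∈ T then lam j - μ else 0) - (k : ℝ) / n * lam j + (k : ℝ) / n * μ := by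
        intro j
        by_cases hj : j ∈ T <;> simp [hf, hg, hj] <;> ring
      rw [Finset.sum_congr rfl fun j _ => expand j]
      rw [Finset.sum_add_distrib, Finset.sum_sub_distrib, ← Finset.mul_sum,
        Finset.sum_ite_mem, Finset.univ_inter, ← htr, Finset.sum_const,
        Finset.card_univ, Fintype.card_fin, Finset.sum_sub_distrib,
        Finset.sum_const, hT]
      have : (k : ℝ) / n * tr = k * μ := by rw [hμ]; field_simp
      rw [this]
      ring_nf
      field_simp
      ring
    have hf2 : ∑ j, f j ^ 2 = ((n : ℝ) - k) * k / n := by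
      have expand : ∀ j, f j ^ 2 =
          (if j ∈ T then (1 : ℝ) else 0) * (1 - 2 * ((k : ℝ) / n)) + ((k : ℝ) / n) ^ 2 := by
        intro j
        by_cases hj : j ∈ T <;> simp [hf, hj] <;> ring
      rw [Finset.sum_congr rfl fun j _ => expand j, Finset.sum_add_distrib,
        ← Finset.sum_mul, hchi, Finset.sum_const, Finset.card_univ, Fintype.card_fin]
      have hkn' : (k : ℝ) ≤ n := by exact_mod_cast hkn
      field_simp
      have hn2 : (n:ℝ)^2 * (n:ℝ)⁻¹^2 = 1 := by field_simp
      linear_combination (k:ℝ)^2 * hn2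
    have hg2 : ∑ j, g j ^ 2 = (A * A).trace.re - tr ^ 2 / n := by
      have expand : ∀ j, g j ^ 2 = lam j ^ 2 - 2 * μ * lam j + μ ^ 2 := by
        intro j; simp only [hg]; ring
      rw [Finset.sum_congr rfl fun j _ => expand j, Finset.sum_add_distrib,
        Finset.sum_sub_distrib, ← Finset.mul_sum, ← htr, Finset.sum_const,
        Finset.card_univ, Fintype.card_fin, htr2, hμ]
      field_simp
      have hn2 : (n:ℝ)^2 * (n:ℝ)⁻¹^2 = 1 := by field_simp
      linear_combination tr^2 * hn2
    have cs := Real.sum_mul_le_sqrt_mul_sqrt Finset.univ f g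
    rw [hfg, hf2, hg2] at cs
    have hμtr : (k : ℝ) * μ = (k : ℝ) / n * tr := by rw [hμ]; field_simp
    linarith [cs]
  -- Nonemptiness of the index type.
  obtain ⟨T0, -, hT0⟩ := Finset.exists_subset_card_eq (s := (Finset.univ : Finset (Fin n))) (n := k)
    (by simpa using hkn)
  haveI : Nonempty {T : Finset (Fin n) // T.card = k} := ⟨⟨T0, hT0⟩⟩
  have bound1 : sumKLargestEigenvalues hA.1 k ≤
      ((k : ℝ) / n) * tr + Real.sqrt (((n : ℝ) - k) * k / n) *
        Real.sqrt ((A * A).trace.re - tr ^ 2 / n) := by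
    apply ciSup_le
    rintro ⟨T, hT⟩
    exact key T hT
  refine ⟨bound1, bound1.trans ?_⟩
  gcongr
  have hb : (0 : ℝ) ≤ ((n : ℝ) - k) * k / n := by
    have hkn' : (k : ℝ) ≤ n := by exact_mod_cast hkn
    apply div_nonneg (mul_nonneg (by linarith) (by positivity)) (by positivity)
  rw [Real.sqrt_mul hb]
  gcongr
  have : (0 : ℝ) ≤ tr ^ 2 / n := by positivity
  linarith
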